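/- Let a, b ∈ ℝ³ be distinct points and let κ ∈ ℝ, ω₀ ∈ ℝ³, v₀ ∈ ℝ³. Define v_a = κ a + ω₀ ×₃ a + v₀ and v_b = κ b + ω₀ ×₃ b + v₀. Let β = (b − a)/‖b − a‖ and P u = u − ⟨β, u⟩β. Then P(v_b − v_a)/‖b − a‖ = ω₀ ×₃ β; that is, the bearing time-derivative P(v_b − v_a)/‖b − a‖ − ω₀ ×₃ β (equivalently, the body-frame bearing derivative up to the rotation Rᵢᵀ) vanishes. -/

import Mathlib

open scoped RealInnerProductSpace

noncomputable section

abbrev E3 := EuclideanSpace ℝ (Fin 3)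

/-- The cross product on `ℝ³`. -/
def cross3 (x y : E3) : E3 :=
  (EuclideanSpace.equiv (Fin 3) ℝ).symm
    ![x 1 * y 2 - x 2 * y 1, x 2 * y 0 - x 0 * y 2, x 0 * y 1 - x 1 * y 0]

/-- The bearing `β = (b - a)/‖b - a‖`. -/
def bearing3 (a b : E3) : E3 := ‖b - a‖⁻¹ • (b - a)

/-- Orthogonal projection `P_β u = u - ⟪β, u⟫ β` onto `span{β}ᗮ`. -/
def proj3 (β u : E3) : E3 := u - ⟪β, u⟫ • β

lemma cross3_apply (x y : E3) (i : Fin 3) :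
    cross3 x y i = ![x 1 * y 2 - x 2 * y 1, x 2 * y 0 - x 0 * y 2,
      x 0 * y 1 - x 1 * y 0] i := rfl

lemma cross3_smul_right (x : E3) (c : ℝ) (y : E3) :
    cross3 x (c • y) = c • cross3 x y := by
  ext i
  simp only [cross3_apply, PiLp.smul_apply, smul_eq_mul]
  fin_cases i <;> simp <;> ring

lemma cross3_sub_right (x y z : E3) :
    cross3 x (y - z) = cross3 x y - cross3 x z := by
  ext i
  simp only [cross3_apply, PiLp.sub_apply]
  fin_cases i <;> simp <;> ring

lemma inner_cross3_self (x y : E3) : ⟪y, cross3 x y⟫ = 0 := by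
  simp only [EuclideanSpace.inner_eq_star_dotProduct]
  simp [dotProduct, Fin.sum_univ_three, cross3_apply]
  ring

/-- Infinitesimal similarity motions (scaling `κ`, rotation with angular velocity `ω₀`
applied to all robots, translation `v₀`) annihilate the bearing time-derivative:
`P(v_b − v_a)/‖b − a‖ = ω₀ × β`, i.e. `T_b ⊆ Null B_G`. -/
theorem similarity_motion_in_null_bearing_rigidity
    (a b : E3) (hab : a ≠ b)
    (κ : ℝ) (ω₀ v₀ : E3)
    (va vb : E3)
    (hva : va = κ • a + cross3 ω₀ a + v₀)
    (hvb : vb = κ • b + cross3 ω₀ b + v₀) :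
    ‖b - a‖⁻¹ • proj3 (bearing3 a b) (vb - va) = cross3 ω₀ (bearing3 a b) := by
  have hr : b - a ≠ 0 := sub_ne_zero.mpr (Ne.symm hab)
  have hn : ‖b - a‖ ≠ 0 := norm_ne_zero_iff.mpr hr
  have hdiff : vb - va = κ • (b - a) + cross3 ω₀ (b - a) := by
    rw [hva, hvb, cross3_sub_right]
    module
  rw [hdiff, bearing3, proj3]
  have h1 : ⟪‖b - a‖⁻¹ • (b - a), κ • (b - a) + cross3 ω₀ (b - a)⟫
      = κ * ‖b - a‖ := by
    rw [inner_add_right, inner_smul_left, inner_smul_left, inner_smul_right,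
      inner_cross3_self, real_inner_self_eq_norm_sq, conj_trivial]
    field_simp
    ring
  rw [h1, cross3_smul_right]
  match_scalars <;> field_simp <;> ring
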